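/- Let m, n be integers. Two elements (a,b), (c,d) of the variant C_Z^{m,n} are L-equivalent if and only if b = d and (a = c or (a ≥ n and c ≥ n)). -/
import Mathlib


/-- The extended bicyclic semigroup operation on ℤ × ℤ. -/
def emul (x y : ℤ × ℤ) : ℤ × ℤ :=
  if x.2 < y.1 then (x.1 - x.2 + y.1, y.2)
  else if x.2 = y.1 then (x.1, y.2)
  else (x.1, y.2 + x.2 - y.1)

/-- The variant (sandwich) operation on ℤ × ℤ with sandwich element (m, n). -/
def vmul (m n : ℤ) (x y : ℤ × ℤ) : ℤ × ℤ := emul (emul x (m, n)) y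

lemma emul_eq (x y : ℤ × ℤ) :
    emul x y = (x.1 + max (y.1 - x.2) 0, y.2 + max (x.2 - y.1) 0) := by
  unfold emul
  split_ifs <;> simp [Prod.ext_iff] <;> omega

lemma mem_char (m n a b : ℤ) (p : ℤ × ℤ) :
    (p = (a, b) ∨ ∃ z : ℤ × ℤ, vmul m n z (a, b) = p) ↔
    (p = (a, b) ∨ b + max (n - a) 0 ≤ p.2) := by
  constructor
  · rintro (h | ⟨z, hz⟩)
    · exact Or.inl h
    · right
      simp only [vmul, emul_eq, Prod.ext_iff] at hz
      omega
  · rintro (h | h)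
    · exact Or.inl h
    · right
      refine ⟨(p.1, m + (a + (p.2 - b)) - n), ?_⟩
      simp only [vmul, emul_eq, Prod.ext_iff]
      constructor <;> omega

theorem variant_L_relation (m n a b c d : ℤ) :
    ({p : ℤ × ℤ | p = (a, b) ∨ ∃ z : ℤ × ℤ, vmul m n z (a, b) = p}
      = {p : ℤ × ℤ | p = (c, d) ∨ ∃ z : ℤ × ℤ, vmul m n z (c, d) = p})
    ↔ (b = d ∧ (a = c ∨ (n ≤ a ∧ n ≤ c))) := by
  simp only [Set.ext_iff, Set.mem_setOf_eq, mem_char]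
  constructor
  · intro h
    have h1 := (h (a, b)).mp (Or.inl rfl)
    have h2 := (h (c, d)).mpr (Or.inl rfl)
    simp only [Prod.ext_iff] at h1 h2
    omega
  · rintro ⟨rfl, (rfl | ⟨h1, h2⟩)⟩
    · intro p; rfl
    · intro p
      simp only [Prod.ext_iff]
      omega
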